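/- The polynomial P₃(T) = T²⁰ − 4T¹⁸ + 10T¹⁶ − 18T¹⁴ + 25T¹² − (307/11)·T¹⁰ + 25T⁸ − 18T⁶ + 10T⁴ − 4T² + 1 ∈ ℚ[T] is irreducible over ℚ, and no complex root of unity is a root of P₃ (i.e. if z ∈ ℂ satisfies zⁿ = 1 for some n ≥ 1, then P₃(z) ≠ 0). -/

import Mathlib

open Polynomial


noncomputable def Qz : ℤ[X] :=
  C 11 * X ^ 20 - C 44 * X ^ 18 + C 110 * X ^ 16 - C 198 * X ^ 14 + C 275 * X ^ 12 -
    C 307 * X ^ 10 + C 275 * X ^ 8 - C 198 * X ^ 6 + C 110 * X ^ 4 - C 44 * X ^ 2 + C 11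

lemma Qz_natDegree : Qz.natDegree = 20 := by unfold Qz; compute_degree!
lemma Qz_coeff0 : Qz.coeff 0 = 11 := by simp [Qz, coeff_X_pow]
lemma Qz_coeff10 : Qz.coeff 10 = -307 := by simp [Qz, coeff_X_pow]
lemma Qz_coeff20 : Qz.coeff 20 = 11 := by simp [Qz, coeff_X_pow]
lemma Qz_lc : Qz.leadingCoeff = 11 := by
  rw [leadingCoeff, Qz_natDegree, Qz_coeff20]
lemma Qz_ne_zero : Qz ≠ 0 := fun h => by simpa [h] using Qz_coeff0

instance fact11 : Fact (Nat.Prime 11) := ⟨by norm_num⟩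

lemma h11 : (11 : (ZMod 11)[X]) = 0 := by
  have : ((11:ℕ) : (ZMod 11)[X]) = 0 := by
    rw [← Polynomial.C_eq_natCast]; norm_num; decide
  simpa using this

lemma Qz_map : Qz.map (Int.castRingHom (ZMod 11)) = X ^ 10 := by
  have h : Qz = X ^ 10 + 11 * (X ^ 20 - 4 * X ^ 18 + 10 * X ^ 16 - 18 * X ^ 14 + 25 * X ^ 12
      - 28 * X ^ 10 + 25 * X ^ 8 - 18 * X ^ 6 + 10 * X ^ 4 - 4 * X ^ 2 + 1) := by
    simp only [Qz, map_ofNat]; ring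
  rw [h]
  simp only [Polynomial.map_add, Polynomial.map_mul, Polynomial.map_pow, Polynomial.map_ofNat,
    Polynomial.map_X, h11, zero_mul, add_zero]

lemma unit_of_C_dvd {a : ℤ} (h : C a ∣ Qz) : IsUnit a := by
  rw [C_dvd_iff_dvd_coeff] at h
  have h0 := h 0
  have h10 := h 10
  rw [Qz_coeff0] at h0
  rw [Qz_coeff10] at h10
  have hd := dvd_add (h0.mul_right 28) h10
  norm_num at hd
  exact isUnit_of_dvd_one hd

lemma aux {A B : ℤ[X]} (hAB : A * B = Qz) (hA : 1 ≤ A.natDegree) (hB : 1 ≤ B.natDegree)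
    {c : ZMod 11} (hc : c ≠ 0) (hmA : A.map (Int.castRingHom (ZMod 11)) = C c) : False := by
  have hA0 : A ≠ 0 := fun h => by simp [h] at hAB; exact Qz_ne_zero hAB.symm
  have hB0 : B ≠ 0 := fun h => by simp [h] at hAB; exact Qz_ne_zero hAB.symm
  obtain ⟨d, hd⟩ := ((isUnit_iff_ne_zero.mpr hc)).exists_right_inv
  have hmB : B.map (Int.castRingHom (ZMod 11)) = C d * X ^ 10 := by
    have hmul : A.map (Int.castRingHom (ZMod 11)) * B.map (Int.castRingHom (ZMod 11)) = X ^ 10 := by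
      rw [← Polynomial.map_mul, hAB, Qz_map]
    rw [hmA] at hmul
    have h2 : C d * (C c * B.map (Int.castRingHom (ZMod 11))) = C d * X ^ 10 := by rw [hmul]
    rw [← mul_assoc, ← C_mul, mul_comm d c, hd, C_1, one_mul] at h2
    exact h2
  have hAk : ∀ k, 1 ≤ k → (11:ℤ) ∣ A.coeff k := by
    intro k hk
    have := congrArg (fun p => p.coeff k) hmA
    simp only [coeff_map, coeff_C, Int.coe_castRingHom] at this
    rw [if_neg (by omega)] at this
    have h2 := (ZMod.intCast_zmod_eq_zero_iff_dvd (A.coeff k) 11).mp this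
    exact_mod_cast h2
  have hBk : ∀ k, k ≠ 10 → (11:ℤ) ∣ B.coeff k := by
    intro k hk
    have := congrArg (fun p => p.coeff k) hmB
    simp only [coeff_map, coeff_C_mul, coeff_X_pow, Int.coe_castRingHom] at this
    rw [if_neg hk, mul_zero] at this
    have h2 := (ZMod.intCast_zmod_eq_zero_iff_dvd (B.coeff k) 11).mp this
    exact_mod_cast h2
  have hB10 : ¬ (11:ℤ) ∣ B.coeff 10 := by
    intro hdvd
    have := congrArg (fun p => p.coeff 10) hmB
    simp only [coeff_map, coeff_C_mul, coeff_X_pow, Int.coe_castRingHom] at this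
    norm_num at this
    have hz : ((B.coeff 10 : ℤ) : ZMod 11) = 0 := by
      rw [ZMod.intCast_zmod_eq_zero_iff_dvd]
      exact_mod_cast hdvd
    rw [hz] at this
    rw [← this] at hd
    simp at hd
  have hsum : A.natDegree + B.natDegree = 20 := by
    rw [← natDegree_mul hA0 hB0, hAB, Qz_natDegree]
  have hlc : A.leadingCoeff * B.leadingCoeff = 11 := by
    rw [← leadingCoeff_mul, hAB, Qz_lc]
  have hlcA : (11:ℤ) ∣ A.leadingCoeff := hAk _ hA
  have hlcB : B.leadingCoeff = 1 ∨ B.leadingCoeff = -1 := by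
    obtain ⟨m, hm⟩ := hlcA
    rw [hm, mul_assoc] at hlc
    have : m * B.leadingCoeff = 1 := by linarith
    rcases Int.isUnit_iff.mp (IsUnit.of_mul_eq_one _ (mul_comm m B.leadingCoeff ▸ this)) with h | h
    · left; exact h
    · right; exact h
  have hdegB : B.natDegree = 10 := by
    by_contra hne
    have := hBk B.natDegree hne
    rw [← leadingCoeff] at this
    rcases hlcB with h | h <;> rw [h] at this <;> omega
  have hQ0 : A.coeff 0 * B.coeff 0 = 11 := by
    rw [← mul_coeff_zero, hAB, Qz_coeff0]
  have hA0u : A.coeff 0 = 1 ∨ A.coeff 0 = -1 := by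
    obtain ⟨m, hm⟩ := hBk 0 (by omega)
    rw [hm] at hQ0
    ring_nf at hQ0
    have : A.coeff 0 * m = 1 := by linarith
    rcases Int.isUnit_iff.mp (IsUnit.of_mul_eq_one _ this) with h | h
    · left; exact h
    · right; exact h
  have hB10u : B.coeff 10 = 1 ∨ B.coeff 10 = -1 := by
    have : B.coeff 10 = B.leadingCoeff := by rw [leadingCoeff, hdegB]
    rw [this]; exact hlcB
  -- the middle coefficient
  have hmem : ((0:ℕ),(10:ℕ)) ∈ Finset.HasAntidiagonal.antidiagonal 10 := by simp
  have hco : Qz.coeff 10 = ∑ x ∈ Finset.HasAntidiagonal.antidiagonal 10, A.coeff x.1 * B.coeff x.2 := by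
    rw [← hAB, coeff_mul]
  have hS : (121:ℤ) ∣ ∑ x ∈ (Finset.HasAntidiagonal.antidiagonal 10).erase (0,10),
      A.coeff x.1 * B.coeff x.2 := by
    refine Finset.dvd_sum ?_
    intro x hx
    obtain ⟨hxne, hxmem⟩ := Finset.mem_erase.mp hx
    have hx12 : x.1 + x.2 = 10 := Finset.HasAntidiagonal.mem_antidiagonal.mp hxmem
    have hx1 : 1 ≤ x.1 := by
      rcases Nat.eq_zero_or_pos x.1 with h | h
      · exfalso; apply hxne
        have : x.2 = 10 := by omega
        exact Prod.ext h this
      · exact h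
    have hx2 : x.2 ≠ 10 := by omega
    have : (121:ℤ) = 11 * 11 := by norm_num
    rw [this]
    exact mul_dvd_mul (hAk _ hx1) (hBk _ hx2)
  rw [← Finset.sum_erase_add _ _ hmem, Qz_coeff10] at hco
  obtain ⟨k, hk⟩ := hS
  rw [hk] at hco
  rcases hA0u with h1 | h1 <;> rcases hB10u with h2 | h2 <;> rw [h1, h2] at hco <;> omega

lemma nonunit_deg {A : ℤ[X]} (h : ¬IsUnit A) (hdvd : A ∣ Qz) : 1 ≤ A.natDegree := by
  by_contra hdeg
  push_neg at hdeg
  interval_cases hA : A.natDegree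
  · obtain ⟨a, ha⟩ := Polynomial.natDegree_eq_zero.mp hA
    apply h
    rw [← ha, Polynomial.isUnit_C]
    exact unit_of_C_dvd (ha ▸ hdvd)

lemma Qz_irred : Irreducible Qz := by
  constructor
  · intro h
    have := Polynomial.natDegree_eq_zero_of_isUnit h
    rw [Qz_natDegree] at this
    omega
  · intro A B hQ
    by_contra hcon
    push_neg at hcon
    obtain ⟨hA, hB⟩ := hcon
    have hAB : A * B = Qz := hQ.symm
    have hdA : 1 ≤ A.natDegree := nonunit_deg hA ⟨B, hQ⟩
    have hdB : 1 ≤ B.natDegree := nonunit_deg hB ⟨A, by rw [hQ, mul_comm]⟩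
    -- map to ZMod 11
    have hmul : A.map (Int.castRingHom (ZMod 11)) * B.map (Int.castRingHom (ZMod 11)) = X ^ 10 := by
      rw [← Polynomial.map_mul, hAB, Qz_map]
    obtain ⟨i, hi, s, hs⟩ : ∃ i, i ≤ 10 ∧ ∃ s : ZMod 11, s ≠ 0 ∧
        A.map (Int.castRingHom (ZMod 11)) = C s * X ^ i := by
      have hdvd : A.map (Int.castRingHom (ZMod 11)) ∣ X ^ 10 :=
        ⟨B.map (Int.castRingHom (ZMod 11)), hmul.symm⟩
      obtain ⟨i, hi, hassoc⟩ := (dvd_prime_pow Polynomial.prime_X 10).mp hdvd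
      obtain ⟨u, hu⟩ := hassoc.symm
      obtain ⟨r, hr, hrc⟩ := Polynomial.isUnit_iff.mp u.isUnit
      refine ⟨i, hi, r, ?_, ?_⟩
      · exact hr.ne_zero
      · rw [← hu, ← hrc, mul_comm]
    obtain ⟨hs0, hsA⟩ := hs
    obtain ⟨j, hj, t, ht⟩ : ∃ j, j ≤ 10 ∧ ∃ t : ZMod 11, t ≠ 0 ∧
        B.map (Int.castRingHom (ZMod 11)) = C t * X ^ j := by
      have hdvd : B.map (Int.castRingHom (ZMod 11)) ∣ X ^ 10 :=
        ⟨A.map (Int.castRingHom (ZMod 11)), by rw [← hmul, mul_comm]⟩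
      obtain ⟨j, hj, hassoc⟩ := (dvd_prime_pow Polynomial.prime_X 10).mp hdvd
      obtain ⟨u, hu⟩ := hassoc.symm
      obtain ⟨r, hr, hrc⟩ := Polynomial.isUnit_iff.mp u.isUnit
      refine ⟨j, hj, r, ?_, ?_⟩
      · exact hr.ne_zero
      · rw [← hu, ← hrc, mul_comm]
    obtain ⟨ht0, htB⟩ := ht
    rcases Nat.eq_zero_or_pos i with hi0 | hi1
    · rw [hi0, pow_zero, mul_one] at hsA
      exact aux hAB hdA hdB hs0 hsA
    · rcases Nat.eq_zero_or_pos j with hj0 | hj1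
      · rw [hj0, pow_zero, mul_one] at htB
        exact aux (by rw [mul_comm]; exact hAB) hdB hdA ht0 htB
      · -- both divisible by X: contradiction with coeff 0
        have hA0 : (11:ℤ) ∣ A.coeff 0 := by
          have := congrArg (fun p => p.coeff 0) hsA
          simp only [coeff_map, coeff_C_mul, coeff_X_pow, Int.coe_castRingHom] at this
          rw [if_neg (by omega), mul_zero] at this
          have h2 := (ZMod.intCast_zmod_eq_zero_iff_dvd (A.coeff 0) 11).mp this
          exact_mod_cast h2
        have hB0 : (11:ℤ) ∣ B.coeff 0 := by
          have := congrArg (fun p => p.coeff 0) htB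
          simp only [coeff_map, coeff_C_mul, coeff_X_pow, Int.coe_castRingHom] at this
          rw [if_neg (by omega), mul_zero] at this
          have h2 := (ZMod.intCast_zmod_eq_zero_iff_dvd (B.coeff 0) 11).mp this
          exact_mod_cast h2
        have hQ0 : A.coeff 0 * B.coeff 0 = 11 := by
          rw [← mul_coeff_zero, hAB, Qz_coeff0]
        obtain ⟨m, hm⟩ := hA0
        obtain ⟨n, hn⟩ := hB0
        rw [hm, hn] at hQ0
        have : 121 * (m * n) = 11 := by ring_nf; ring_nf at hQ0; linarith
        omega


/-- The normalized characteristic polynomial of Frobenius for `X_γ`, `γ` a nonzero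
square mod 11. -/
noncomputable def P₃ : ℚ[X] :=
  X ^ 20 - 4 * X ^ 18 + 10 * X ^ 16 - 18 * X ^ 14 + 25 * X ^ 12 - C (307 / 11 : ℚ) * X ^ 10 +
    25 * X ^ 8 - 18 * X ^ 6 + 10 * X ^ 4 - 4 * X ^ 2 + 1

lemma Qz_map_Q : Qz.map (Int.castRingHom ℚ) = C (11:ℚ) * P₃ := by
  have hC : (11:ℚ[X]) * C (307 / 11 : ℚ) = 307 := by
    rw [← map_ofNat (C : ℚ →+* ℚ[X]) 11, ← map_ofNat (C : ℚ →+* ℚ[X]) 307, ← C_mul]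
    norm_num
  simp only [Qz, Polynomial.map_add, Polynomial.map_sub, Polynomial.map_mul, Polynomial.map_pow,
    Polynomial.map_X, map_C, P₃, Int.coe_castRingHom, Int.cast_ofNat, map_ofNat, Polynomial.map_ofNat]
  linear_combination (X:ℚ[X]) ^ 10 * hC

lemma Qz_primitive : Qz.IsPrimitive := fun r hr => unit_of_C_dvd hr

lemma P₃_irred : Irreducible P₃ := by
  have h1 : Irreducible (Qz.map (Int.castRingHom ℚ)) :=
    (Polynomial.IsPrimitive.Int.irreducible_iff_irreducible_map_cast Qz_primitive).mp Qz_irred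
  rw [Qz_map_Q] at h1
  have hu : IsUnit (C (11:ℚ)) := Polynomial.isUnit_C.mpr (by norm_num)
  have hassoc : Associated (C (11:ℚ) * P₃) P₃ := by
    obtain ⟨u, hu'⟩ := hu
    exact ⟨u⁻¹, by rw [← hu', mul_comm, ← mul_assoc]; simp⟩
  exact hassoc.irreducible h1

lemma P₃_monic : P₃.Monic := by
  unfold P₃
  monicity!

lemma P₃_coeff10 : P₃.coeff 10 = -(307/11 : ℚ) := by
  simp [P₃, coeff_X_pow, coeff_one]

/-- `P₃` is irreducible over `ℚ`, and no complex root of unity is a root of `P₃`. -/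
theorem stmt16 :
    Irreducible P₃ ∧ ∀ z : ℂ, (∃ n : ℕ, 1 ≤ n ∧ z ^ n = 1) → aeval z P₃ ≠ 0 := by
  refine ⟨P₃_irred, ?_⟩
  rintro z ⟨n, hn, hz⟩ haev
  have hint : IsIntegral ℤ z := by
    refine ⟨X ^ n - C 1, Polynomial.monic_X_pow_sub_C 1 (by omega), ?_⟩
    simp [hz]
  have hmin : minpoly ℚ z = P₃ :=
    (minpoly.eq_of_irreducible_of_monic P₃_irred haev P₃_monic).symm
  have heq : minpoly ℚ z = (minpoly ℤ z).map (algebraMap ℤ ℚ) :=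
    minpoly.isIntegrallyClosed_eq_field_fractions ℚ ℂ hint
  have h10 : (((minpoly ℤ z).coeff 10 : ℤ) : ℚ) = -(307/11 : ℚ) := by
    rw [← P₃_coeff10, ← hmin, heq, coeff_map]
    rfl
  set m := (minpoly ℤ z).coeff 10
  have : (11:ℚ) * ((m : ℤ) : ℚ) = -307 := by rw [h10]; norm_num
  have h11m : (11 * m : ℤ) = -307 := by exact_mod_cast this
  omega
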